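/- For every a ∈ ℚ_2 and every x ∈ ℚ_2, φ(x/2 − a) = (1/2)·(φ(x − 2a) + ψ⁰(x − 2a)). Consequently V_1 = V_0 ⊕ W_0, where W_0 is the orthogonal complement of V_0 in V_1 and is the closed span of the shifts ψ⁰(·−a), a ∈ I_2. -/

import Mathlib

open MeasureTheory

/-- The refinable function: the indicator of `ℤ_2` inside `ℚ_[2]`. -/
noncomputable def phi2 : ℚ_[2] → ℂ :=
  Set.indicator {x : ℚ_[2] | ‖x‖ ≤ 1} 1

/-- The 2-adic Haar wavelet function `ψ⁰(x) = φ(x/2) − φ(x/2 − 1/2)`. -/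
noncomputable def psi0 : ℚ_[2] → ℂ :=
  fun x => phi2 (x / 2) - phi2 (x / 2 - 1 / 2)

namespace PadicHaarAux

lemma norm_two : ‖(2 : ℚ_[2])‖ = 1/2 := by
  have h := @Padic.norm_p 2 ⟨Nat.prime_two⟩
  norm_num at h
  exact h

lemma phi2_apply (t : ℚ_[2]) : phi2 t = if ‖t‖ ≤ 1 then 1 else 0 := by
  by_cases h : ‖t‖ ≤ 1 <;> simp [phi2, Set.indicator_apply, h]

lemma norm_half (y : ℚ_[2]) : ‖y / 2‖ = 2 * ‖y‖ := by
  rw [norm_div, norm_two]; ring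

lemma norm_half_le (y : ℚ_[2]) : ‖y / 2‖ ≤ 1 ↔ ‖y‖ ≤ 1/2 := by
  rw [norm_half]; constructor <;> intro h <;> linarith

lemma lt_one_iff (y : ℚ_[2]) : ‖y‖ ≤ 1/2 ↔ ‖y‖ < 1 := by
  have h := Padic.norm_le_pow_iff_norm_lt_pow_add_one (p := 2) y (-1)
  norm_num at h
  exact h

/-- Dichotomy: a 2-adic number of norm exactly 1 is ≡ 1 mod 2. -/
lemma unit_dichotomy (y : ℚ_[2]) (h1 : ‖y‖ ≤ 1) (h2 : ¬ ‖y‖ ≤ 1/2) : ‖y - 1‖ ≤ 1/2 := by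
  rw [lt_one_iff] at h2 ⊢
  set z : ℤ_[2] := ⟨y, h1⟩ with hz
  have hzn : ¬ ‖z‖ < 1 := h2
  have hz0 : (PadicInt.toZMod z) ≠ 0 := by
    intro h0
    have : z ∈ RingHom.ker (PadicInt.toZMod : ℤ_[2] →+* ZMod 2) := h0
    rw [PadicInt.ker_toZMod, PadicInt.maximalIdeal_eq_span_p, Ideal.mem_span_singleton] at this
    exact hzn ((PadicInt.norm_lt_one_iff_dvd z).2 this)
  have hz1 : PadicInt.toZMod (z - 1) = 0 := by
    rw [map_sub, map_one]
    have : ∀ c : ZMod 2, c ≠ 0 → c - 1 = 0 := by decide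
    exact this _ hz0
  have hmem : (z - 1) ∈ RingHom.ker (PadicInt.toZMod : ℤ_[2] →+* ZMod 2) := hz1
  rw [PadicInt.ker_toZMod, PadicInt.maximalIdeal_eq_span_p, Ideal.mem_span_singleton] at hmem
  have : ‖z - 1‖ < 1 := (PadicInt.norm_lt_one_iff_dvd _).mpr hmem
  have hco : ((z - 1 : ℤ_[2]) : ℚ_[2]) = y - 1 := rfl
  rwa [PadicInt.norm_def, hco] at this

lemma norm_sub_one_eq_one {y : ℚ_[2]} (h : ‖y‖ < 1) : ‖y - 1‖ = 1 := by
  have : ‖y + (-1)‖ = max ‖y‖ ‖(-1 : ℚ_[2])‖ := by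
    apply Padic.add_eq_max_of_ne
    simp only [norm_neg, norm_one]
    exact ne_of_lt h
  simp only [norm_neg, norm_one] at this
  rw [sub_eq_add_neg, this, max_eq_right h.le]

lemma norm_sub_one_eq {y : ℚ_[2]} (h : 1 < ‖y‖) : ‖y - 1‖ = ‖y‖ := by
  have : ‖y + (-1)‖ = max ‖y‖ ‖(-1 : ℚ_[2])‖ := by
    apply Padic.add_eq_max_of_ne
    simp only [norm_neg, norm_one]
    exact ne_of_gt h
  simp only [norm_neg, norm_one] at this
  rw [sub_eq_add_neg, this, max_eq_left h.le]

/-- The key refinement identity: `φ(y) = φ(y/2) + φ(y/2 − 1/2)`. -/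
lemma phi2_refine (y : ℚ_[2]) : phi2 y = phi2 (y / 2) + phi2 (y / 2 - 1/2) := by
  have hv : y / 2 - 1/2 = (y - 1) / 2 := by ring
  rw [hv, phi2_apply, phi2_apply, phi2_apply]
  simp only [norm_half_le]
  by_cases h1 : ‖y‖ ≤ 1
  · by_cases h2 : ‖y‖ ≤ 1/2
    · have h3 : ¬ ‖y - 1‖ ≤ 1/2 := by
        rw [norm_sub_one_eq_one ((lt_one_iff y).1 h2)]; norm_num
      rw [if_pos h1, if_pos h2, if_neg h3]; ring
    · have h3 : ‖y - 1‖ ≤ 1/2 := unit_dichotomy y h1 h2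
      rw [if_pos h1, if_neg h2, if_pos h3]; ring
  · have hgt : 1 < ‖y‖ := lt_of_not_ge h1
    have h2 : ¬ ‖y‖ ≤ 1/2 := by intro h; linarith
    have h3 : ¬ ‖y - 1‖ ≤ 1/2 := by rw [norm_sub_one_eq hgt]; intro h; linarith
    rw [if_neg h1, if_neg h2, if_neg h3]; ring

lemma phi2_shift (t c : ℚ_[2]) (hc : ‖c‖ ≤ 1) : phi2 (t - c) = phi2 t := by
  rw [phi2_apply, phi2_apply]
  congr 1
  have h1 : ∀ u v : ℚ_[2], ‖v‖ ≤ 1 → ‖u - v‖ ≤ 1 → ‖u‖ ≤ 1 := by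
    intro u v hv huv
    have := Padic.nonarchimedean (u - v) v
    simp only [sub_add_cancel] at this
    exact this.trans (max_le huv hv)
  exact propext ⟨fun h => h1 t c hc h, fun h => by
    have := Padic.nonarchimedean t (-c)
    simp only [norm_neg] at this
    exact le_trans (by rwa [← sub_eq_add_neg] at this) (max_le h hc)⟩

lemma psi0_shift_one (t : ℚ_[2]) : psi0 (t - 1) = - psi0 t := by
  have h1 : (t - 1) / 2 = t/2 - 1/2 := by ring
  have h2 : (t - 1) / 2 - 1/2 = t/2 - 1 := by ring
  have h2' : t/2 - 1/2 - 1/2 = t/2 - 1 := by ring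
  simp only [psi0, h1, h2']
  rw [phi2_shift (t/2) 1 (by norm_num)]
  ring


end PadicHaarAux

/-- The set `I_2` of fractional-part representatives of `ℚ_2/ℤ_2`. -/
def I2 : Set ℚ_[2] :=
  {a | ∃ γ m : ℕ, m < 2 ^ γ ∧ a = (m : ℚ_[2]) / (2 : ℚ_[2]) ^ γ}

namespace PadicHaarAux

lemma two_ne' : (2 : ℚ_[2]) ≠ 0 := two_ne_zero

lemma zero_mem_I2 : (0 : ℚ_[2]) ∈ I2 := ⟨0, 0, by norm_num, by norm_num⟩

lemma I2_half {a : ℚ_[2]} (ha : a ∈ I2) : a / 2 ∈ I2 := by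
  obtain ⟨γ, m, hm, rfl⟩ := ha
  refine ⟨γ + 1, m, ?_, ?_⟩
  · calc m < 2 ^ γ := hm
      _ ≤ 2 ^ (γ + 1) := Nat.pow_le_pow_right (by norm_num) (Nat.le_succ _)
  · rw [pow_succ]; ring

lemma I2_half_add_one {a : ℚ_[2]} (ha : a ∈ I2) : (a + 1) / 2 ∈ I2 := by
  obtain ⟨γ, m, hm, rfl⟩ := ha
  refine ⟨γ + 1, m + 2 ^ γ, ?_, ?_⟩
  · have : (2:ℕ) ^ (γ + 1) = 2 ^ γ + 2 ^ γ := by rw [pow_succ]; ring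
    omega
  · have h2 : ((2:ℚ_[2]) ^ γ) ≠ 0 := pow_ne_zero _ two_ne'
    have h2' : ((2:ℚ_[2]) ^ (γ+1)) ≠ 0 := pow_ne_zero _ two_ne'
    push_cast
    rw [pow_succ]
    field_simp

lemma I2_double {a : ℚ_[2]} (ha : a ∈ I2) :
    ∃ a' ∈ I2, ∃ q : ℕ, q ≤ 1 ∧ 2 * a = (q : ℚ_[2]) + a' := by
  obtain ⟨γ, m, hm, rfl⟩ := ha
  cases γ with
  | zero =>
    have : m = 0 := by omega
    subst this
    exact ⟨0, zero_mem_I2, 0, Nat.zero_le _, by norm_num⟩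
  | succ k =>
    refine ⟨(m % 2 ^ k : ℕ) / (2:ℚ_[2]) ^ k, ⟨k, m % 2 ^ k, Nat.mod_lt _ (Nat.pow_pos (by norm_num)), rfl⟩,
      m / 2 ^ k, ?_, ?_⟩
    · have hlt : m < 2 ^ k * 2 := by rw [← pow_succ]; exact hm
      have : m / 2 ^ k < 2 := Nat.div_lt_of_lt_mul hlt
      omega
    · have hk : ((2:ℚ_[2]) ^ k) ≠ 0 := pow_ne_zero _ two_ne'
      have hm' : (2:ℕ) ^ k * (m / 2 ^ k) + m % 2 ^ k = m := Nat.div_add_mod m (2 ^ k)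
      have hc : ((2:ℚ_[2]) ^ k) * ((m / 2 ^ k : ℕ) : ℚ_[2]) + ((m % 2 ^ k : ℕ) : ℚ_[2])
          = (m : ℚ_[2]) := by exact_mod_cast congrArg (Nat.cast : ℕ → ℚ_[2]) hm'
      rw [pow_succ, ← hc]
      field_simp

lemma norm_natCast_le_one (q : ℕ) : ‖(q : ℚ_[2])‖ ≤ 1 := by
  have := Padic.norm_int_le_one (p := 2) (q : ℤ)
  push_cast at this
  exact this

section MeasureLemmas

variable [MeasurableSpace ℚ_[2]] [BorelSpace ℚ_[2]]
variable (μ : Measure ℚ_[2]) [μ.IsAddHaarMeasure]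

omit [MeasurableSpace ℚ_[2]] [BorelSpace ℚ_[2]] in
lemma ball_eq (c : ℚ_[2]) (r : ℝ) : {x : ℚ_[2] | ‖x - c‖ ≤ r} = Metric.closedBall c r := by
  ext x; simp [Metric.mem_closedBall, dist_eq_norm]

lemma ball_meas (c : ℚ_[2]) (r : ℝ) : MeasurableSet {x : ℚ_[2] | ‖x - c‖ ≤ r} := by
  rw [ball_eq]; exact Metric.isClosed_closedBall.measurableSet

lemma ball_fin (c : ℚ_[2]) (r : ℝ) : μ {x : ℚ_[2] | ‖x - c‖ ≤ r} < ⊤ := by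
  rw [ball_eq]; exact (isCompact_closedBall c r).measure_lt_top

lemma ball_measure_eq (c : ℚ_[2]) (r : ℝ) :
    μ {x : ℚ_[2] | ‖x - c‖ ≤ r} = μ {x : ℚ_[2] | ‖x‖ ≤ r} := by
  have hset : {x : ℚ_[2] | ‖x - c‖ ≤ r} = (fun h : ℚ_[2] => -c + h) ⁻¹' {x : ℚ_[2] | ‖x‖ ≤ r} := by
    ext x; simp [neg_add_eq_sub]
  rw [hset, measure_preimage_add]

lemma memLp_ind (c : ℚ_[2]) (r : ℝ) :
    MemLp (Set.indicator {x : ℚ_[2] | ‖x - c‖ ≤ r} fun _ => (1:ℂ)) 2 μ :=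
  memLp_indicator_const 2 (ball_meas c r) 1 (Or.inr (ball_fin μ c r).ne)

end MeasureLemmas

lemma funV0_eq (a : ℚ_[2]) :
    (fun x : ℚ_[2] => phi2 (x - a))
      = Set.indicator {x : ℚ_[2] | ‖x - a‖ ≤ 1} (fun _ => (1:ℂ)) := by
  funext x
  by_cases h : ‖x - a‖ ≤ 1 <;> simp [phi2_apply, Set.indicator_apply, h]

lemma funV1_eq (a : ℚ_[2]) :
    (fun x : ℚ_[2] => phi2 ((2:ℚ_[2])^(-1:ℤ) * x - a))
      = Set.indicator {x : ℚ_[2] | ‖x - 2*a‖ ≤ 1/2} (fun _ => (1:ℂ)) := by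
  funext x
  have harg : (2:ℚ_[2])^(-1:ℤ) * x - a = (x - 2*a) / 2 := by
    rw [zpow_neg_one]; field_simp
  rw [harg, phi2_apply, Set.indicator_apply]
  simp only [Set.mem_setOf_eq]
  by_cases h : ‖x - 2*a‖ ≤ 1/2
  · rw [if_pos ((norm_half_le _).2 h), if_pos h]
  · rw [if_neg (fun hc => h ((norm_half_le _).1 hc)), if_neg h]

lemma funW0_eq (a : ℚ_[2]) :
    (fun x : ℚ_[2] => psi0 (x - a))
      = fun x => Set.indicator {x : ℚ_[2] | ‖x - a‖ ≤ 1/2} (fun _ => (1:ℂ)) x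
          - Set.indicator {x : ℚ_[2] | ‖x - (a+1)‖ ≤ 1/2} (fun _ => (1:ℂ)) x := by
  funext x
  have h2 : (x - a) / 2 - 1/2 = (x - (a+1)) / 2 := by ring
  simp only [psi0, h2]
  congr 1
  · rw [phi2_apply, Set.indicator_apply]
    simp only [Set.mem_setOf_eq]
    by_cases h : ‖x - a‖ ≤ 1/2
    · rw [if_pos ((norm_half_le _).2 h), if_pos h]
    · rw [if_neg (fun hc => h ((norm_half_le _).1 hc)), if_neg h]
  · rw [phi2_apply, Set.indicator_apply]
    simp only [Set.mem_setOf_eq]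
    by_cases h : ‖x - (a+1)‖ ≤ 1/2
    · rw [if_pos ((norm_half_le _).2 h), if_pos h]
    · rw [if_neg (fun hc => h ((norm_half_le _).1 hc)), if_neg h]

end PadicHaarAux

namespace PadicHaarAux

open scoped InnerProductSpace

lemma star_ind (S : Set ℚ_[2]) (x : ℚ_[2]) :
    (starRingEnd ℂ) (Set.indicator S (fun _ => (1:ℂ)) x) = Set.indicator S (fun _ => (1:ℂ)) x := by
  by_cases h : x ∈ S <;> simp [Set.indicator_apply, h]

lemma ind_mul (S T : Set ℚ_[2]) (x : ℚ_[2]) :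
    Set.indicator S (fun _ => (1:ℂ)) x * Set.indicator T (fun _ => (1:ℂ)) x
      = Set.indicator (S ∩ T) (fun _ => (1:ℂ)) x := by
  by_cases hS : x ∈ S <;> by_cases hT : x ∈ T <;>
    simp [Set.indicator_apply, hS, hT, Set.mem_inter_iff]

lemma tri (u v w : ℚ_[2]) : ‖u - w‖ ≤ max ‖u - v‖ ‖v - w‖ := by
  have h := Padic.nonarchimedean (u - v) (v - w)
  simpa using h

section InnerGen

variable [MeasurableSpace ℚ_[2]] [BorelSpace ℚ_[2]]
variable (μ : Measure ℚ_[2]) [μ.IsAddHaarMeasure]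

lemma inner_gen_zero (a b : ℚ_[2]) (f g : Lp ℂ 2 μ)
    (hf : ⇑f =ᵐ[μ] fun x => phi2 (x - a)) (hg : ⇑g =ᵐ[μ] fun x => psi0 (x - b)) :
    inner (𝕜 := ℂ) f g = 0 := by
  set S := {x : ℚ_[2] | ‖x - a‖ ≤ 1} with hS
  set T1 := {x : ℚ_[2] | ‖x - b‖ ≤ (1:ℝ)/2} with hT1
  set T2 := {x : ℚ_[2] | ‖x - (b+1)‖ ≤ (1:ℝ)/2} with hT2
  have hST1 : MeasurableSet (S ∩ T1) := (ball_meas a 1).inter (ball_meas b _)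
  have hST2 : MeasurableSet (S ∩ T2) := (ball_meas a 1).inter (ball_meas (b+1) _)
  have hfin1 : μ (S ∩ T1) ≠ ⊤ :=
    (lt_of_le_of_lt (measure_mono Set.inter_subset_right) (ball_fin μ b _)).ne
  have hfin2 : μ (S ∩ T2) ≠ ⊤ :=
    (lt_of_le_of_lt (measure_mono Set.inter_subset_right) (ball_fin μ (b+1) _)).ne
  have key : (inner (𝕜 := ℂ) f g)
      = ∫ x, (Set.indicator (S ∩ T1) (fun _ => (1:ℂ)) x
          - Set.indicator (S ∩ T2) (fun _ => (1:ℂ)) x) ∂μ := by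
    rw [MeasureTheory.L2.inner_def]
    apply integral_congr_ae
    filter_upwards [hf, hg] with x hfx hgx
    rw [RCLike.inner_apply, hfx, hgx]
    have e1 : phi2 (x - a) = Set.indicator S (fun _ => (1:ℂ)) x := congrFun (funV0_eq a) x
    have e2 : psi0 (x - b) = Set.indicator T1 (fun _ => (1:ℂ)) x
        - Set.indicator T2 (fun _ => (1:ℂ)) x := congrFun (funW0_eq b) x
    rw [e1, e2, star_ind, mul_comm, mul_sub, ind_mul, ind_mul]
  have hi1 : Integrable (Set.indicator (S ∩ T1) fun _ => (1:ℂ)) μ := by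
    rw [← memLp_one_iff_integrable]
    exact memLp_indicator_const 1 hST1 1 (Or.inr hfin1)
  have hi2 : Integrable (Set.indicator (S ∩ T2) fun _ => (1:ℂ)) μ := by
    rw [← memLp_one_iff_integrable]
    exact memLp_indicator_const 1 hST2 1 (Or.inr hfin2)
  rw [key, integral_sub hi1 hi2, integral_indicator_const (1:ℂ) hST1,
    integral_indicator_const (1:ℂ) hST2]
  by_cases hab : ‖a - b‖ ≤ 1
  · have hsub1 : T1 ⊆ S := by
      intro x hx
      have h1 : ‖x - b‖ ≤ (1:ℝ)/2 := hx
      have h2 := tri x b a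
      have h3 : ‖b - a‖ ≤ 1 := by rw [norm_sub_rev] at hab; exact hab
      have : ‖x - a‖ ≤ 1 := h2.trans (max_le (by linarith) h3)
      exact this
    have hsub2 : T2 ⊆ S := by
      intro x hx
      have h1 : ‖x - (b+1)‖ ≤ (1:ℝ)/2 := hx
      have h2 := tri x (b+1) a
      have h3 : ‖b + 1 - a‖ ≤ 1 := by
        have h4 := Padic.nonarchimedean (b - a) 1
        have h5 : b - a + 1 = b + 1 - a := by ring
        rw [h5] at h4
        have h6 : ‖b - a‖ ≤ 1 := by rw [norm_sub_rev]; exact hab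
        exact h4.trans (max_le h6 (by norm_num))
      have : ‖x - a‖ ≤ 1 := h2.trans (max_le (by linarith) h3)
      exact this
    have h1 : S ∩ T1 = T1 := Set.inter_eq_self_of_subset_right hsub1
    have h2 : S ∩ T2 = T2 := Set.inter_eq_self_of_subset_right hsub2
    rw [h1, h2, hT1, hT2, measureReal_def, measureReal_def, ball_measure_eq μ b, ball_measure_eq μ (b+1)]
    simp
  · have h1 : S ∩ T1 = ∅ := by
      rw [Set.eq_empty_iff_forall_notMem]
      rintro x ⟨hxS, hxT⟩
      have hxS' : ‖x - a‖ ≤ 1 := hxS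
      have hxT' : ‖x - b‖ ≤ (1:ℝ)/2 := hxT
      have h2 := tri a x b
      rw [norm_sub_rev a x] at h2
      exact hab (h2.trans (max_le hxS' (by linarith)))
    have h2 : S ∩ T2 = ∅ := by
      rw [Set.eq_empty_iff_forall_notMem]
      rintro x ⟨hxS, hxT⟩
      have hxS' : ‖x - a‖ ≤ 1 := hxS
      have hxT' : ‖x - (b+1)‖ ≤ (1:ℝ)/2 := hxT
      have h3 : ‖x - b‖ ≤ 1 := by
        have h4 := Padic.nonarchimedean (x - (b+1)) 1
        have h5 : x - (b+1) + 1 = x - b := by ring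
        rw [h5] at h4
        exact h4.trans (max_le (by linarith) (by norm_num))
      have h6 := tri a x b
      rw [norm_sub_rev a x] at h6
      exact hab (h6.trans (max_le hxS' h3))
    rw [h1, h2]
    simp

end InnerGen

/-- The sum of two orthogonal closed subspaces of a Hilbert space is closed. -/
lemma isClosed_sup_of_orth {E : Type*} [NormedAddCommGroup E] [InnerProductSpace ℂ E]
    [CompleteSpace E] (U W : Submodule ℂ E)
    (hU : IsClosed (U : Set E)) (hW : IsClosed (W : Set E))
    (horth : ∀ u ∈ U, ∀ w ∈ W, inner (𝕜 := ℂ) u w = 0) :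
    IsClosed ((U ⊔ W : Submodule ℂ E) : Set E) := by
  haveI : CompleteSpace U := hU.completeSpace_coe
  haveI : CompleteSpace W := hW.completeSpace_coe
  have hWU : W ≤ Uᗮ := fun w hw =>
    (Submodule.mem_orthogonal _ _).2 fun u hu => horth u hu w hw
  have hUW : U ≤ Wᗮ := fun u hu =>
    (Submodule.mem_orthogonal _ _).2 fun w hw => inner_eq_zero_symm.1 (horth u hu w hw)
  apply isClosed_of_closure_subset
  intro x hx
  set p : E := (U.orthogonalProjectionOnto x : E) with hp
  set q : E := (W.orthogonalProjectionOnto x : E) with hq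
  have hpU : p ∈ U := (U.orthogonalProjectionOnto x).2
  have hqW : q ∈ W := (W.orthogonalProjectionOnto x).2
  have hxpU : x - p ∈ Uᗮ := Submodule.sub_starProjection_mem_orthogonal (K := U) x
  have hxqW : x - q ∈ Wᗮ := Submodule.sub_starProjection_mem_orthogonal (K := W) x
  have hd : x - p - q ∈ (U ⊔ W)ᗮ := by
    rw [← Submodule.inf_orthogonal]
    refine Submodule.mem_inf.2 ⟨?_, ?_⟩
    · exact Uᗮ.sub_mem hxpU (hWU hqW)
    · have h1 : x - p - q = x - q - p := sub_right_comm x p q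
      rw [h1]
      exact Wᗮ.sub_mem hxqW (hUW hpU)
  have hxK : x ∈ (U ⊔ W).topologicalClosure := by
    rw [← SetLike.mem_coe, Submodule.topologicalClosure_coe]
    exact hx
  have hdK : x - p - q ∈ (U ⊔ W).topologicalClosure := by
    refine Submodule.sub_mem _ (Submodule.sub_mem _ hxK ?_) ?_
    · exact (U ⊔ W).le_topologicalClosure (Submodule.mem_sup_left hpU)
    · exact (U ⊔ W).le_topologicalClosure (Submodule.mem_sup_right hqW)
  have hZ : IsClosed {y : E | inner (𝕜 := ℂ) y (x - p - q) = 0} :=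
    isClosed_eq (Continuous.inner continuous_id continuous_const) continuous_const
  have hZsub : ((U ⊔ W : Submodule ℂ E) : Set E) ⊆ {y : E | inner (𝕜 := ℂ) y (x - p - q) = 0} :=
    fun y hy => (Submodule.mem_orthogonal _ _).1 hd y hy
  have hdZ : (x - p - q) ∈ {y : E | inner (𝕜 := ℂ) y (x - p - q) = 0} := by
    have h7 : (x - p - q) ∈ closure ((U ⊔ W : Submodule ℂ E) : Set E) := by
      rw [← Submodule.topologicalClosure_coe]
      exact hdK
    exact (hZ.closure_subset_iff.2 hZsub) h7
  have hx0 : x - p - q = 0 := inner_self_eq_zero.mp hdZ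
  have hxeq : x = p + q := by
    rw [sub_sub] at hx0
    exact sub_eq_zero.mp hx0
  rw [SetLike.mem_coe, hxeq]
  exact Submodule.add_mem _ (Submodule.mem_sup_left hpU) (Submodule.mem_sup_right hqW)

end PadicHaarAux

/-- The space `V_j`: the closed `ℂ`-linear span in `L²(ℚ_2, μ)` of the functions
`x ↦ φ(2^{-j} x − a)`, `a ∈ I_2`. -/
noncomputable def Vsp [MeasurableSpace ℚ_[2]] (μ : Measure ℚ_[2]) (j : ℤ) :
    Submodule ℂ (Lp ℂ 2 μ) :=
  (Submodule.span ℂ {f : Lp ℂ 2 μ | ∃ a ∈ I2,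
    (f : ℚ_[2] → ℂ) =ᵐ[μ] fun x => phi2 ((2 : ℚ_[2]) ^ (-j) * x - a)}).topologicalClosure

/-- The wavelet space `W_0`: the closed `ℂ`-linear span in `L²(ℚ_2, μ)` of the shifts
`x ↦ ψ⁰(x − a)`, `a ∈ I_2`. -/
noncomputable def W0sp [MeasurableSpace ℚ_[2]] (μ : Measure ℚ_[2]) :
    Submodule ℂ (Lp ℂ 2 μ) :=
  (Submodule.span ℂ {f : Lp ℂ 2 μ | ∃ a ∈ I2,
    (f : ℚ_[2] → ℂ) =ᵐ[μ] fun x => psi0 (x - a)}).topologicalClosure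

open PadicHaarAux in
theorem refinable_splits_and_V1_eq_V0_oplus_W0
    [MeasurableSpace ℚ_[2]] [BorelSpace ℚ_[2]]
    (μ : Measure ℚ_[2]) [μ.IsAddHaarMeasure]
    (hμ : μ {x : ℚ_[2] | ‖x‖ ≤ 1} = 1) :
    (∀ a x : ℚ_[2], phi2 (x / 2 - a) =
      (1 / 2 : ℂ) * (phi2 (x - 2 * a) + psi0 (x - 2 * a))) ∧
    Vsp μ 0 ⊔ W0sp μ = Vsp μ 1 ∧
    (∀ f ∈ Vsp μ 0, ∀ g ∈ W0sp μ, inner (𝕜 := ℂ) f g = 0) := by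
  classical
  -- Part 1: the pointwise refinement identity
  have part1 : ∀ a x : ℚ_[2], phi2 (x / 2 - a) =
      (1 / 2 : ℂ) * (phi2 (x - 2 * a) + psi0 (x - 2 * a)) := by
    intro a x
    have hu : x / 2 - a = (x - 2 * a) / 2 := by ring
    rw [hu, phi2_refine (x - 2 * a)]
    simp only [psi0]
    ring
  -- Memℒp facts and toLp generators
  have memV0 : ∀ a : ℚ_[2], MemLp (fun x => phi2 (x - a)) 2 μ := by
    intro a
    rw [funV0_eq a]
    exact memLp_ind μ a 1
  have memV1 : ∀ a : ℚ_[2], MemLp (fun x => phi2 ((2:ℚ_[2])^(-1:ℤ) * x - a)) 2 μ := by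
    intro a
    rw [funV1_eq a]
    exact memLp_ind μ (2*a) (1/2)
  have memW0 : ∀ a : ℚ_[2], MemLp (fun x => psi0 (x - a)) 2 μ := by
    intro a
    rw [funW0_eq a]
    exact ((memLp_ind μ a (1/2)).sub (memLp_ind μ (a+1) (1/2)))
  -- V0-generator functions in normalized form
  have hV0fun : ∀ a : ℚ_[2],
      (fun x : ℚ_[2] => phi2 ((2:ℚ_[2])^(-(0:ℤ)) * x - a)) = fun x => phi2 (x - a) := by
    intro a; funext x; norm_num
  -- Orthogonality
  have horth : ∀ f ∈ Vsp μ 0, ∀ g ∈ W0sp μ, inner (𝕜 := ℂ) f g = 0 := by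
    have hVperp : Vsp μ 0 ≤ (W0sp μ)ᗮ := by
      refine Submodule.topologicalClosure_minimal _ ?_ (Submodule.isClosed_orthogonal _)
      rw [Submodule.span_le]
      rintro f ⟨a, ha, hf⟩
      have hf' : ⇑f =ᵐ[μ] fun x => phi2 (x - a) := hf.trans (.of_eq (hV0fun a))
      rw [SetLike.mem_coe]
      have hle : W0sp μ ≤ (Submodule.span ℂ ({f} : Set (Lp ℂ 2 μ)))ᗮ := by
        refine Submodule.topologicalClosure_minimal _ ?_ (Submodule.isClosed_orthogonal _)
        rw [Submodule.span_le]
        rintro g ⟨b, hb, hg⟩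
        rw [SetLike.mem_coe, Submodule.mem_orthogonal]
        intro v hv
        rw [Submodule.mem_span_singleton] at hv
        obtain ⟨c, rfl⟩ := hv
        rw [inner_smul_left, inner_gen_zero μ a b f g hf' hg, mul_zero]
      rw [Submodule.mem_orthogonal]
      intro u hu
      exact inner_eq_zero_symm.1
        ((Submodule.mem_orthogonal _ _).1 (hle hu) f (Submodule.mem_span_singleton_self f))
    intro f hf g hg
    exact inner_eq_zero_symm.1 ((Submodule.mem_orthogonal _ _).1 (hVperp hf) g hg)
  refine ⟨part1, ?_, horth⟩
  -- helper: membership of toLp generators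
  have hV1memgen : ∀ b : ℚ_[2], b ∈ I2 → ((memV1 b).toLp _) ∈ Vsp μ 1 := by
    intro b hb
    apply (Submodule.span ℂ _).le_topologicalClosure
    apply Submodule.subset_span
    exact ⟨b, hb, (memV1 b).coeFn_toLp⟩
  have hV0memgen : ∀ b : ℚ_[2], b ∈ I2 → ((memV0 b).toLp _) ∈ Vsp μ 0 := by
    intro b hb
    apply (Submodule.span ℂ _).le_topologicalClosure
    apply Submodule.subset_span
    refine ⟨b, hb, ?_⟩
    exact (memV0 b).coeFn_toLp.trans (.of_eq (hV0fun b).symm)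
  have hW0memgen : ∀ b : ℚ_[2], b ∈ I2 → ((memW0 b).toLp _) ∈ W0sp μ := by
    intro b hb
    apply (Submodule.span ℂ _).le_topologicalClosure
    apply Submodule.subset_span
    exact ⟨b, hb, (memW0 b).coeFn_toLp⟩
  -- V0 ≤ V1
  have hV0le : Vsp μ 0 ≤ Vsp μ 1 := by
    refine Submodule.topologicalClosure_minimal _ ?_ (Submodule.isClosed_topologicalClosure _)
    rw [Submodule.span_le]
    rintro f ⟨a, ha, hf⟩
    have hf' : ⇑f =ᵐ[μ] fun x => phi2 (x - a) := hf.trans (.of_eq (hV0fun a))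
    have hpoint : ∀ x : ℚ_[2], phi2 (x - a)
        = phi2 ((2:ℚ_[2])^(-1:ℤ) * x - a/2) + phi2 ((2:ℚ_[2])^(-1:ℤ) * x - (a+1)/2) := by
      intro x
      have e1 : (2:ℚ_[2])^(-1:ℤ) * x - a/2 = (x - a)/2 := by rw [zpow_neg_one]; ring
      have e2 : (2:ℚ_[2])^(-1:ℤ) * x - (a+1)/2 = (x - a)/2 - 1/2 := by rw [zpow_neg_one]; ring
      rw [e1, e2, ← phi2_refine]
    have hfeq : f = (memV1 (a/2)).toLp _ + (memV1 ((a+1)/2)).toLp _ := by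
      apply Lp.ext
      filter_upwards [hf', Lp.coeFn_add ((memV1 (a/2)).toLp _) ((memV1 ((a+1)/2)).toLp _),
        (memV1 (a/2)).coeFn_toLp, (memV1 ((a+1)/2)).coeFn_toLp] with x h1 h2 h3 h4
      rw [h1, h2, Pi.add_apply, h3, h4, hpoint x]
    rw [SetLike.mem_coe, hfeq]
    exact Submodule.add_mem _ (hV1memgen _ (I2_half ha)) (hV1memgen _ (I2_half_add_one ha))
  -- W0 ≤ V1
  have hW0le : W0sp μ ≤ Vsp μ 1 := by
    refine Submodule.topologicalClosure_minimal _ ?_ (Submodule.isClosed_topologicalClosure _)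
    rw [Submodule.span_le]
    rintro f ⟨a, ha, hf⟩
    have hpoint : ∀ x : ℚ_[2], psi0 (x - a)
        = phi2 ((2:ℚ_[2])^(-1:ℤ) * x - a/2) - phi2 ((2:ℚ_[2])^(-1:ℤ) * x - (a+1)/2) := by
      intro x
      have e1 : (2:ℚ_[2])^(-1:ℤ) * x - a/2 = (x - a)/2 := by rw [zpow_neg_one]; ring
      have e2 : (2:ℚ_[2])^(-1:ℤ) * x - (a+1)/2 = (x - a)/2 - 1/2 := by rw [zpow_neg_one]; ring
      rw [e1, e2]
      simp only [psi0]
    have hfeq : f = (memV1 (a/2)).toLp _ - (memV1 ((a+1)/2)).toLp _ := by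
      apply Lp.ext
      filter_upwards [hf, Lp.coeFn_sub ((memV1 (a/2)).toLp _) ((memV1 ((a+1)/2)).toLp _),
        (memV1 (a/2)).coeFn_toLp, (memV1 ((a+1)/2)).coeFn_toLp] with x h1 h2 h3 h4
      rw [h1, h2, Pi.sub_apply, h3, h4, hpoint x]
    rw [SetLike.mem_coe, hfeq]
    exact Submodule.sub_mem _ (hV1memgen _ (I2_half ha)) (hV1memgen _ (I2_half_add_one ha))
  -- V1 ≤ V0 ⊔ W0
  have hsupClosed : IsClosed ((Vsp μ 0 ⊔ W0sp μ : Submodule ℂ (Lp ℂ 2 μ)) : Set (Lp ℂ 2 μ)) :=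
    isClosed_sup_of_orth _ _ (Submodule.isClosed_topologicalClosure _)
      (Submodule.isClosed_topologicalClosure _) horth
  have hV1le : Vsp μ 1 ≤ Vsp μ 0 ⊔ W0sp μ := by
    refine Submodule.topologicalClosure_minimal _ ?_ hsupClosed
    rw [Submodule.span_le]
    rintro f ⟨a, ha, hf⟩
    obtain ⟨a', ha', q, hq, hqa⟩ := I2_double ha
    have hgV0 : ((memV0 a').toLp _) ∈ Vsp μ 0 ⊔ W0sp μ :=
      Submodule.mem_sup_left (hV0memgen a' ha')
    have hhW0 : ((memW0 a').toLp _) ∈ Vsp μ 0 ⊔ W0sp μ :=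
      Submodule.mem_sup_right (hW0memgen a' ha')
    interval_cases q
    · -- q = 0 : 2a = a'
      have ha2 : 2 * a = a' := by rw [hqa]; norm_num
      have hpoint : ∀ x : ℚ_[2], phi2 ((2:ℚ_[2])^(-(1:ℤ)) * x - a)
          = (1/2 : ℂ) * phi2 (x - a') + (1/2 : ℂ) * psi0 (x - a') := by
        intro x
        have e1 : (2:ℚ_[2])^(-(1:ℤ)) * x - a = x / 2 - a := by rw [zpow_neg_one]; ring
        rw [e1, part1 a x, ← ha2]
        ring
      have hfeq : f = (1/2 : ℂ) • (memV0 a').toLp _ + (1/2 : ℂ) • (memW0 a').toLp _ := by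
        apply Lp.ext
        filter_upwards [hf,
          Lp.coeFn_add ((1/2 : ℂ) • (memV0 a').toLp _) ((1/2 : ℂ) • (memW0 a').toLp _),
          Lp.coeFn_smul (1/2 : ℂ) ((memV0 a').toLp _),
          Lp.coeFn_smul (1/2 : ℂ) ((memW0 a').toLp _),
          (memV0 a').coeFn_toLp, (memW0 a').coeFn_toLp] with x h1 h2 h3 h4 h5 h6
        rw [h1, h2, Pi.add_apply, h3, h4, Pi.smul_apply, Pi.smul_apply, h5, h6,
          hpoint x, smul_eq_mul, smul_eq_mul]
      rw [SetLike.mem_coe, hfeq]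
      exact Submodule.add_mem _ (Submodule.smul_mem _ _ hgV0) (Submodule.smul_mem _ _ hhW0)
    · -- q = 1 : 2a = 1 + a'
      have ha2 : 2 * a = 1 + a' := by rw [hqa]; norm_num
      have hpoint : ∀ x : ℚ_[2], phi2 ((2:ℚ_[2])^(-(1:ℤ)) * x - a)
          = (1/2 : ℂ) * phi2 (x - a') - (1/2 : ℂ) * psi0 (x - a') := by
        intro x
        have e1 : (2:ℚ_[2])^(-(1:ℤ)) * x - a = x / 2 - a := by rw [zpow_neg_one]; ring
        have e2 : x - 2 * a = (x - a') - 1 := by rw [ha2]; ring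
        rw [e1, part1 a x, e2, phi2_shift (x - a') 1 (by norm_num), psi0_shift_one (x - a')]
        ring
      have hfeq : f = (1/2 : ℂ) • (memV0 a').toLp _ - (1/2 : ℂ) • (memW0 a').toLp _ := by
        apply Lp.ext
        filter_upwards [hf,
          Lp.coeFn_sub ((1/2 : ℂ) • (memV0 a').toLp _) ((1/2 : ℂ) • (memW0 a').toLp _),
          Lp.coeFn_smul (1/2 : ℂ) ((memV0 a').toLp _),
          Lp.coeFn_smul (1/2 : ℂ) ((memW0 a').toLp _),
          (memV0 a').coeFn_toLp, (memW0 a').coeFn_toLp] with x h1 h2 h3 h4 h5 h6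
        rw [h1, h2, Pi.sub_apply, h3, h4, Pi.smul_apply, Pi.smul_apply, h5, h6,
          hpoint x, smul_eq_mul, smul_eq_mul]
      rw [SetLike.mem_coe, hfeq]
      exact Submodule.sub_mem _ (Submodule.smul_mem _ _ hgV0) (Submodule.smul_mem _ _ hhW0)
  exact le_antisymm (sup_le hV0le hW0le) hV1le
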